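/- Let B, K₁, K₂ be real symmetric positive definite p×p matrices, γ ∈ (0,1), and K_Δ = B + γK₁ + (1−γ)K₂. Then (B+K₂)K_Δ⁻¹(B+K₁) − B is positive definite. -/

import Mathlib

open Matrix

section Aux
variable {p : ℕ}

lemma posdef_smul' {c : ℝ} (hc : 0 < c) {M : Matrix (Fin p) (Fin p) ℝ} (hM : M.PosDef) :
    (c • M).PosDef := by
  refine PosDef.of_dotProduct_mulVec_pos (by rw [IsHermitian, conjTranspose_smul, star_trivial, hM.1]) (fun x hx => ?_)
  have := hM.dotProduct_mulVec_pos hx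
  rw [smul_mulVec, dotProduct_smul]
  exact mul_pos hc this

lemma posdef_conj' {M N : Matrix (Fin p) (Fin p) ℝ} (hM : M.PosDef)
    (hN : N.IsHermitian) (hNd : IsUnit N.det) : (N * M * N).PosDef := by
  rw [posDef_iff_dotProduct_mulVec]
  constructor
  · have h1 := hM.1
    unfold IsHermitian at *
    rw [conjTranspose_mul, conjTranspose_mul, h1, hN, Matrix.mul_assoc]
  · intro x hx
    have hx' : N *ᵥ x ≠ 0 := by
      intro h
      apply hx
      have : N⁻¹ *ᵥ (N *ᵥ x) = x := by
        rw [mulVec_mulVec, nonsing_inv_mul N hNd, one_mulVec]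
      rw [h, mulVec_zero] at this
      exact this.symm
    have hpos := hM.dotProduct_mulVec_pos hx'
    have key : star x ⬝ᵥ ((N * M * N) *ᵥ x) = star (N *ᵥ x) ⬝ᵥ (M *ᵥ (N *ᵥ x)) := by
      rw [← mulVec_mulVec, ← mulVec_mulVec]
      rw [dotProduct_mulVec (star x) N, star_mulVec]
      congr 1
      rw [hN]
    rw [key]
    exact hpos

lemma inv_sub_inv_posdef' {A C : Matrix (Fin p) (Fin p) ℝ} (hC : C.PosDef)
    (hAC : (A - C).PosDef) : (C⁻¹ - A⁻¹).PosDef := by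
  have hA : A.PosDef := by
    have := hAC.add hC
    simpa using this
  have hAd : IsUnit A.det := (isUnit_iff_isUnit_det A).mp hA.isUnit
  have hCd : IsUnit C.det := (isUnit_iff_isUnit_det C).mp hC.isUnit
  have hDd : IsUnit (A - C).det := (isUnit_iff_isUnit_det _).mp hAC.isUnit
  have h1 : A * A⁻¹ = 1 := mul_nonsing_inv A hAd
  have h2 : A⁻¹ * A = 1 := nonsing_inv_mul A hAd
  have h3 : C * C⁻¹ = 1 := mul_nonsing_inv C hCd
  have h4 : C⁻¹ * C = 1 := nonsing_inv_mul C hCd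
  have key : C⁻¹ - A⁻¹ = A⁻¹ * ((A - C) + (A - C) * C⁻¹ * (A - C)) * A⁻¹ := by
    have expand : (A - C) + (A - C) * C⁻¹ * (A - C) = A * C⁻¹ * A - A := by
      simp only [Matrix.sub_mul, Matrix.mul_sub, h3, Matrix.mul_assoc, h4, Matrix.mul_one,
        Matrix.one_mul]
      abel
    rw [expand]
    simp only [Matrix.mul_sub, Matrix.sub_mul, ← Matrix.mul_assoc, h2, Matrix.one_mul]
    rw [Matrix.mul_assoc, h1, Matrix.mul_one]
  rw [key]
  have hmid : ((A - C) + (A - C) * C⁻¹ * (A - C)).PosDef := by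
    refine hAC.add ?_
    exact posdef_conj' hC.inv hAC.1 hDd
  exact posdef_conj' hmid hA.inv.1 ((isUnit_iff_isUnit_det _).mp hA.inv.isUnit)

end Aux

theorem stmt12 (p : ℕ) (B K₁ K₂ : Matrix (Fin p) (Fin p) ℝ)
    (hB : B.PosDef) (hK₁ : K₁.PosDef) (hK₂ : K₂.PosDef)
    (γ : ℝ) (hγ0 : 0 < γ) (hγ1 : γ < 1) :
    ((B + K₂) * (B + γ • K₁ + (1 - γ) • K₂)⁻¹ * (B + K₁) - B).PosDef := by
  have hγ1' : 0 < 1 - γ := by linarith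
  set A₁ := B + K₁ with hA₁def
  set A₂ := B + K₂ with hA₂def
  set T := B + γ • K₁ + (1 - γ) • K₂ with hTdef
  have hA₁ : A₁.PosDef := hB.add hK₁
  have hA₂ : A₂.PosDef := hB.add hK₂
  have hT : T.PosDef := (hB.add (posdef_smul' hγ0 hK₁)).add (posdef_smul' hγ1' hK₂)
  have hA₁d : IsUnit A₁.det := (isUnit_iff_isUnit_det _).mp hA₁.isUnit
  have hA₂d : IsUnit A₂.det := (isUnit_iff_isUnit_det _).mp hA₂.isUnit
  have hBd : IsUnit B.det := (isUnit_iff_isUnit_det _).mp hB.isUnit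
  set N := (1 - γ) • A₁⁻¹ + γ • A₂⁻¹ with hNdef
  have hN : N.PosDef := (posdef_smul' hγ1' hA₁.inv).add (posdef_smul' hγ0 hA₂.inv)
  have hTsplit : T = γ • A₁ + (1 - γ) • A₂ := by
    rw [hTdef, hA₁def, hA₂def]
    module
  have hNeq : N = A₁⁻¹ * T * A₂⁻¹ := by
    rw [hTsplit, Matrix.mul_add, Matrix.add_mul]
    rw [Matrix.mul_smul, Matrix.smul_mul, Matrix.mul_smul, Matrix.smul_mul]
    rw [nonsing_inv_mul A₁ hA₁d, Matrix.one_mul, Matrix.mul_assoc, mul_nonsing_inv A₂ hA₂d,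
      Matrix.mul_one]
    rw [hNdef]
    abel
  have hNinv : N⁻¹ = A₂ * T⁻¹ * A₁ := by
    rw [hNeq, Matrix.mul_inv_rev, Matrix.mul_inv_rev, nonsing_inv_nonsing_inv _ hA₁d,
      nonsing_inv_nonsing_inv _ hA₂d, Matrix.mul_assoc]
  have hBN : (B⁻¹ - N).PosDef := by
    have e1 : (A₁ - B).PosDef := by
      have : A₁ - B = K₁ := by rw [hA₁def]; abel
      rw [this]; exact hK₁
    have e2 : (A₂ - B).PosDef := by
      have : A₂ - B = K₂ := by rw [hA₂def]; abel
      rw [this]; exact hK₂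
    have p1 := inv_sub_inv_posdef' hB e1
    have p2 := inv_sub_inv_posdef' hB e2
    have : B⁻¹ - N = (1 - γ) • (B⁻¹ - A₁⁻¹) + γ • (B⁻¹ - A₂⁻¹) := by
      rw [hNdef]; module
    rw [this]
    exact (posdef_smul' hγ1' p1).add (posdef_smul' hγ0 p2)
  have final := inv_sub_inv_posdef' hN (by simpa using hBN)
  rw [nonsing_inv_nonsing_inv _ hBd, hNinv] at final
  simpa using final
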